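/- Let s, t ∈ ℂ and let S_n denote the continuous dual Hahn polynomial with first parameter 1/2: S_n(x² | 1/2, s, t) = (1/2+s)_n (1/2+t)_n · Σ_{k=0}^{n} [(−n)_k / ((1/2+s)_k (1/2+t)_k k!)] · ∏_{j=0}^{k−1} ((1/2+j)² + x²), a polynomial in x². Define the operator P̃ acting on functions g : ℂ → ℂ by (P̃g)(x) = −(1/(4ix))·[(t−ix)(s−ix)g(x+i) − (s+ix)(t+ix)g(x−i)]. Then for every n ∈ ℕ and every x ∈ ℂ with x ≠ 0, (P̃ S_n(·²|1/2,s,t))(x) = (n + (s+t)/2)·S_n(x²|1/2,s,t), where S_n is evaluated as a polynomial in the square of its argument (so at x±i the argument of the polynomial is (x±i)²). -/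
import Mathlib

noncomputable section

open Complex

/-- The continuous dual Hahn polynomial S_n(x² | 1/2, s, t), as a function of x. -/
def cdHahn (n : ℕ) (s t x : ℂ) : ℂ :=
  (ascPochhammer ℂ n).eval (1 / 2 + s) * (ascPochhammer ℂ n).eval (1 / 2 + t) *
    ∑ k ∈ Finset.range (n + 1),
      ((ascPochhammer ℂ k).eval (-(n : ℂ)) /
          ((ascPochhammer ℂ k).eval (1 / 2 + s) * (ascPochhammer ℂ k).eval (1 / 2 + t) *
            (Nat.factorial k : ℂ))) *
        ∏ j ∈ Finset.range k, ((1 / 2 + (j : ℂ)) ^ 2 + x ^ 2)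

/-- The basic even polynomial building block. -/
def Bf (x : ℂ) (k : ℕ) : ℂ := ∏ j ∈ Finset.range k, ((1 / 2 + (j : ℂ)) ^ 2 + x ^ 2)

/-- The lowering term in the action of the operator. -/
def gf (s t x : ℂ) : ℕ → ℂ
  | 0 => 0
  | (k + 1) => ((k : ℂ) + 1) * (s + (k : ℂ) + 1 / 2) * (t + (k : ℂ) + 1 / 2) * Bf x k

lemma Bf_succ (x : ℂ) (k : ℕ) : Bf x (k + 1) = Bf x k * ((1 / 2 + (k : ℂ)) ^ 2 + x ^ 2) :=
  Finset.prod_range_succ _ _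

lemma gf_mul (s t x : ℂ) (k : ℕ) :
    gf s t x k * (((k : ℂ) - 1 / 2) ^ 2 + x ^ 2)
      = (k : ℂ) * (s + (k : ℂ) - 1 / 2) * (t + (k : ℂ) - 1 / 2) * Bf x k := by
  cases k with
  | zero => simp [gf]
  | succ m =>
    show (((m : ℂ) + 1) * (s + (m : ℂ) + 1 / 2) * (t + (m : ℂ) + 1 / 2) * Bf x m) * _ = _
    rw [Bf_succ]
    push_cast
    ring

/-- Key structural lemma: action of the two shift terms on each `Bf`. -/
lemma key (s t x : ℂ) (k : ℕ) :
    ((t - I * x) * (s - I * x) * Bf (x + I) k - (s + I * x) * (t + I * x) * Bf (x - I) k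
      = -2 * I * x * (s + t + 2 * (k : ℂ)) * Bf x k + 4 * I * x * gf s t x k)
    ∧ ((t - I * x) * (s - I * x) * Bf (x + I) k + (s + I * x) * (t + I * x) * Bf (x - I) k
      = -2 * Bf x (k + 1) + (2 * s * t + 4 * (k : ℂ) * (s + t) + 6 * (k : ℂ) ^ 2 + 1 / 2) * Bf x k
        - 2 * (2 * (k : ℂ) - 1) * gf s t x k) := by
  induction k with
  | zero =>
    constructor
    · simp only [Bf, gf, Finset.range_zero, Finset.prod_empty, Nat.cast_zero]
      ring
    · simp only [Bf, gf, Nat.cast_zero, zero_add, Finset.prod_range_one, Finset.range_zero,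
        Finset.prod_empty]
      linear_combination (2 * x ^ 2) * Complex.I_sq
  | succ k ih =>
    obtain ⟨hD, hP⟩ := ih
    have hg := gf_mul s t x k
    rw [Bf_succ] at hP
    constructor
    · rw [Bf_succ, Bf_succ, Bf_succ]
      show _ = _ + 4 * I * x * (((k : ℂ) + 1) * (s + (k : ℂ) + 1 / 2) * (t + (k : ℂ) + 1 / 2) * Bf x k)
      push_cast
      linear_combination (((k : ℂ) + 1 / 2) ^ 2 + x ^ 2 - 1) * hD + (2 * I * x) * hP
        + (4 * I * x) * hg
        + ((t - I * x) * (s - I * x) * Bf (x + I) k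
            - (s + I * x) * (t + I * x) * Bf (x - I) k) * Complex.I_sq
    · rw [Bf_succ, Bf_succ, Bf_succ, Bf_succ]
      show _ = _ - 2 * (2 * ((k : ℕ) + 1 : ℕ) - 1) *
        (((k : ℂ) + 1) * (s + (k : ℂ) + 1 / 2) * (t + (k : ℂ) + 1 / 2) * Bf x k)
      push_cast
      linear_combination (2 * I * x) * hD + (((k : ℂ) + 1 / 2) ^ 2 + x ^ 2 - 1) * hP
        + (-2 * (2 * (k : ℂ) + 3)) * hg
        + ((t - I * x) * (s - I * x) * Bf (x + I) k
            + (s + I * x) * (t + I * x) * Bf (x - I) k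
            + 8 * x ^ 2 * gf s t x k
            - 4 * x ^ 2 * (2 * (k : ℂ) + s + t) * Bf x k) * Complex.I_sq

lemma asc_ne {a : ℂ} {n : ℕ} (h : (ascPochhammer ℂ n).eval a ≠ 0) :
    ∀ j ≤ n, (ascPochhammer ℂ j).eval a ≠ 0 := by
  intro j hj hz
  apply h
  obtain ⟨m, rfl⟩ := Nat.exists_eq_add_of_le hj
  clear h hj
  induction m with
  | zero => exact hz
  | succ m ihm =>
    rw [show j + (m + 1) = (j + m) + 1 from rfl, ascPochhammer_succ_eval, ihm, zero_mul]

open Polynomial in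
lemma hcoef_lemma (s t : ℂ) (n j : ℕ)
    (hs1 : (ascPochhammer ℂ j).eval (1 / 2 + s) ≠ 0)
    (ht1 : (ascPochhammer ℂ j).eval (1 / 2 + t) ≠ 0)
    (hs2 : (1 / 2 + s + (j : ℂ)) ≠ 0)
    (ht2 : (1 / 2 + t + (j : ℂ)) ≠ 0) :
    ((ascPochhammer ℂ n).eval (1 / 2 + s) * (ascPochhammer ℂ n).eval (1 / 2 + t)) *
        ((ascPochhammer ℂ j).eval (-(n : ℂ)) /
          ((ascPochhammer ℂ j).eval (1 / 2 + s) * (ascPochhammer ℂ j).eval (1 / 2 + t) *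
            (Nat.factorial j : ℂ))) * ((j : ℂ) - (n : ℂ))
      = ((ascPochhammer ℂ n).eval (1 / 2 + s) * (ascPochhammer ℂ n).eval (1 / 2 + t)) *
        ((ascPochhammer ℂ (j + 1)).eval (-(n : ℂ)) /
          ((ascPochhammer ℂ (j + 1)).eval (1 / 2 + s) * (ascPochhammer ℂ (j + 1)).eval (1 / 2 + t) *
            (Nat.factorial (j + 1) : ℂ))) *
        (((j : ℂ) + 1) * (s + (j : ℂ) + 1 / 2) * (t + (j : ℂ) + 1 / 2)) := by
  have hfac : ((Nat.factorial j : ℂ)) ≠ 0 := Nat.cast_ne_zero.mpr (Nat.factorial_ne_zero j)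
  have hj1 : ((j : ℂ) + 1) ≠ 0 := Nat.cast_add_one_ne_zero j
  simp only [ascPochhammer_succ_eval, Nat.factorial_succ]
  push_cast
  generalize (ascPochhammer ℂ n).eval (1 / 2 + s) * (ascPochhammer ℂ n).eval (1 / 2 + t) = P
  generalize hN : (ascPochhammer ℂ j).eval (-(n : ℂ)) = N
  generalize ha : (ascPochhammer ℂ j).eval (1 / 2 + s) = a at hs1
  generalize hb : (ascPochhammer ℂ j).eval (1 / 2 + t) = b at ht1
  generalize hF : ((Nat.factorial j : ℕ) : ℂ) = F at hfac
  rw [show (s + (j : ℂ) + 1 / 2) = 1 / 2 + s + (j : ℂ) from by ring,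
    show (t + (j : ℂ) + 1 / 2) = 1 / 2 + t + (j : ℂ) from by ring]
  generalize hw1 : (1 / 2 + s + (j : ℂ)) = w1 at hs2
  generalize hw2 : (1 / 2 + t + (j : ℂ)) = w2 at ht2
  generalize hE : ((j : ℂ) + 1) = E at hj1
  field_simp
  ring

lemma comb_lemma (F : Finset ℕ) (p u v : ℂ) (a b cc : ℕ → ℂ) :
    -(u * (p * ∑ k ∈ F, cc k * a k) - v * (p * ∑ k ∈ F, cc k * b k))
      = ∑ k ∈ F, p * (cc k * (v * b k - u * a k)) := by
  induction F using Finset.cons_induction with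
  | empty => simp
  | cons k F hk ih =>
    rw [Finset.sum_cons, Finset.sum_cons, Finset.sum_cons]
    linear_combination ih

set_option maxHeartbeats 1200000 in
/-- the operator
(P̃g)(x) = −(1/(4ix))[(t−ix)(s−ix)g(x+i) − (s+ix)(t+ix)g(x−i)] is diagonalized
by the continuous dual Hahn polynomials S_n(x²|1/2,s,t) with eigenvalue
n + (s+t)/2. -/
theorem stmt8 (s t : ℂ) (n : ℕ) (x : ℂ) (hx : x ≠ 0) :
    -(1 / (4 * I * x)) *
        ((t - I * x) * (s - I * x) * cdHahn n s t (x + I)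
          - (s + I * x) * (t + I * x) * cdHahn n s t (x - I))
      = ((n : ℂ) + (s + t) / 2) * cdHahn n s t x := by
  by_cases hpre : (ascPochhammer ℂ n).eval (1 / 2 + s) * (ascPochhammer ℂ n).eval (1 / 2 + t) = 0
  · have h0 : ∀ y : ℂ, cdHahn n s t y = 0 := by
      intro y; unfold cdHahn; rw [hpre, zero_mul]
    rw [h0, h0, h0]; ring
  · have hs := asc_ne (left_ne_zero_of_mul hpre)
    have ht := asc_ne (right_ne_zero_of_mul hpre)
    have h4 : (4 : ℂ) * I * x ≠ 0 := by
      simp [Complex.I_ne_zero, hx]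
    set pre : ℂ := (ascPochhammer ℂ n).eval (1 / 2 + s) * (ascPochhammer ℂ n).eval (1 / 2 + t)
      with hpre_def
    set c : ℕ → ℂ := fun k =>
      (ascPochhammer ℂ k).eval (-(n : ℂ)) /
        ((ascPochhammer ℂ k).eval (1 / 2 + s) * (ascPochhammer ℂ k).eval (1 / 2 + t) *
          (Nat.factorial k : ℂ)) with hc
    have hcd : ∀ y : ℂ, cdHahn n s t y = pre * ∑ k ∈ Finset.range (n + 1), c k * Bf y k := by
      intro y; rfl
    rw [hcd, hcd, hcd]
    apply mul_left_cancel₀ h4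
    rw [show (4 * I * x) * (-(1 / (4 * I * x)) *
        ((t - I * x) * (s - I * x) * (pre * ∑ k ∈ Finset.range (n + 1), c k * Bf (x + I) k)
          - (s + I * x) * (t + I * x) * (pre * ∑ k ∈ Finset.range (n + 1), c k * Bf (x - I) k)))
      = -((t - I * x) * (s - I * x) * (pre * ∑ k ∈ Finset.range (n + 1), c k * Bf (x + I) k)
          - (s + I * x) * (t + I * x) * (pre * ∑ k ∈ Finset.range (n + 1), c k * Bf (x - I) k))
      from by field_simp]
    -- main sum identity
    have sumid :
        ∑ k ∈ Finset.range (n + 1), pre * c k * (((k : ℂ) - (n : ℂ)) * Bf x k)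
          = ∑ k ∈ Finset.range (n + 1), pre * c k * gf s t x k := by
      rw [Finset.sum_range_succ, Finset.sum_range_succ']
      simp only [sub_self, mul_zero, zero_mul, add_zero, gf, mul_zero, add_zero]
      refine Finset.sum_congr rfl ?_
      intro j hj
      have hjn : j < n := Finset.mem_range.mp hj
      show pre * c j * (((j : ℂ) - (n : ℂ)) * Bf x j)
        = pre * c (j + 1) * (((j : ℂ) + 1) * (s + (j : ℂ) + 1 / 2) * (t + (j : ℂ) + 1 / 2) * Bf x j)
      have hcoef : pre * c j * ((j : ℂ) - (n : ℂ))
          = pre * c (j + 1) * (((j : ℂ) + 1) * (s + (j : ℂ) + 1 / 2) * (t + (j : ℂ) + 1 / 2)) := by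
        have hs1 : (ascPochhammer ℂ j).eval (1 / 2 + s) ≠ 0 := hs j (by omega)
        have ht1 : (ascPochhammer ℂ j).eval (1 / 2 + t) ≠ 0 := ht j (by omega)
        have hs2 : (1 / 2 + s + (j : ℂ)) ≠ 0 := by
          have := hs (j + 1) (by omega)
          rw [ascPochhammer_succ_eval] at this
          exact right_ne_zero_of_mul this
        have ht2 : (1 / 2 + t + (j : ℂ)) ≠ 0 := by
          have := ht (j + 1) (by omega)
          rw [ascPochhammer_succ_eval] at this
          exact right_ne_zero_of_mul this
        exact hcoef_lemma s t n j hs1 ht1 hs2 ht2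
      calc pre * c j * (((j : ℂ) - (n : ℂ)) * Bf x j)
          = (pre * c j * ((j : ℂ) - (n : ℂ))) * Bf x j := by ring
        _ = (pre * c (j + 1) * (((j : ℂ) + 1) * (s + (j : ℂ) + 1 / 2) * (t + (j : ℂ) + 1 / 2)))
              * Bf x j := by rw [hcoef]
        _ = _ := by ring
    calc -((t - I * x) * (s - I * x) * (pre * ∑ k ∈ Finset.range (n + 1), c k * Bf (x + I) k)
            - (s + I * x) * (t + I * x) * (pre * ∑ k ∈ Finset.range (n + 1), c k * Bf (x - I) k))
        = ∑ k ∈ Finset.range (n + 1),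
            pre * (c k * ((s + I * x) * (t + I * x) * Bf (x - I) k
              - (t - I * x) * (s - I * x) * Bf (x + I) k)) :=
          comb_lemma _ _ _ _ _ _ _
      _ = (∑ k ∈ Finset.range (n + 1), 4 * I * x * (pre * c k * (((k : ℂ) - (n : ℂ)) * Bf x k)))
            - (∑ k ∈ Finset.range (n + 1), 4 * I * x * (pre * c k * gf s t x k))
            + ∑ k ∈ Finset.range (n + 1),
                c k * Bf x k * (4 * I * x * ((n : ℂ) + (s + t) / 2) * pre) := by
          rw [← Finset.sum_sub_distrib, ← Finset.sum_add_distrib]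
          refine Finset.sum_congr rfl fun k _ => ?_
          linear_combination (-(pre * c k)) * (key s t x k).1
      _ = 4 * I * x * (∑ k ∈ Finset.range (n + 1), pre * c k * (((k : ℂ) - (n : ℂ)) * Bf x k))
            - 4 * I * x * (∑ k ∈ Finset.range (n + 1), pre * c k * gf s t x k)
            + (∑ k ∈ Finset.range (n + 1), c k * Bf x k)
                * (4 * I * x * ((n : ℂ) + (s + t) / 2) * pre) := by
          rw [← Finset.mul_sum, ← Finset.mul_sum, ← Finset.sum_mul]
      _ = 4 * I * x * (((n : ℂ) + (s + t) / 2)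
            * (pre * ∑ k ∈ Finset.range (n + 1), c k * Bf x k)) := by
          rw [sumid]
          ring
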